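/- Let b = Σ_{n≥0} b_n X^n be a formal power series with complex coefficients. Then the following are equivalent: (i) there exists a formal power series c = Σ_{n≥0} c_n X^n with complex coefficients such that b = c̄·c, where c̄ = Σ_{n≥0} conj(c_n) X^n is the series with complex-conjugated coefficients; (ii) every coefficient b_n is real, and either b = 0 or the least index l with b_l ≠ 0 is even and b_l > 0. (Characterization of positivity for formal power series, used for positivity of the interacting two-point function.) -/

import Mathlib

open PowerSeries Finset

/-- Coefficients of the formal square root of a series with coefficients `a`. -/
noncomputable def sqCoeff (a : ℕ → ℝ) : ℕ → ℝ
  | 0 => Real.sqrt (a 0)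
  | n + 1 => (a (n + 1) - ∑ j ∈ (Finset.range n).attach,
      sqCoeff a (j.1 + 1) * sqCoeff a (n - j.1)) / (2 * Real.sqrt (a 0))
  termination_by n => n
  decreasing_by
    all_goals (have := j.2; simp only [Finset.mem_range] at this; omega)

lemma sqCoeff_spec (a : ℕ → ℝ) (ha : 0 < a 0) (n : ℕ) :
    ∑ i ∈ Finset.range (n + 1), sqCoeff a i * sqCoeff a (n - i) = a n := by
  have hs : Real.sqrt (a 0) ≠ 0 := by positivity
  cases n with
  | zero => simp [sqCoeff, Real.mul_self_sqrt ha.le]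
  | succ n =>
    rw [Finset.sum_range_succ, Finset.sum_range_succ']
    have hM : ∑ j ∈ (Finset.range n).attach,
        sqCoeff a (j.1 + 1) * sqCoeff a (n - j.1)
        = ∑ j ∈ Finset.range n, sqCoeff a (j + 1) * sqCoeff a (n - j) :=
      Finset.sum_attach _ fun j => sqCoeff a (j + 1) * sqCoeff a (n - j)
    have hval : sqCoeff a (n + 1) = (a (n + 1) -
        ∑ j ∈ Finset.range n, sqCoeff a (j + 1) * sqCoeff a (n - j))
        / (2 * Real.sqrt (a 0)) := by
      rw [sqCoeff, hM]
    have h0 : sqCoeff a 0 = Real.sqrt (a 0) := by rw [sqCoeff]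
    simp only [Nat.succ_sub_succ, Nat.sub_zero, Nat.sub_self, hval, h0]
    field_simp
    ring

theorem powerSeries_positivity_characterization (b : PowerSeries ℂ) :
    (∃ c : PowerSeries ℂ, b = PowerSeries.map (starRingEnd ℂ) c * c) ↔
      ((∀ n : ℕ, ∃ r : ℝ, PowerSeries.coeff n b = (r : ℂ)) ∧
        (b = 0 ∨ ∃ l : ℕ, (∀ k < l, PowerSeries.coeff k b = 0) ∧
          PowerSeries.coeff l b ≠ 0 ∧ Even l ∧ 0 < (PowerSeries.coeff l b).re)) := by
  constructor
  · rintro ⟨c, rfl⟩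
    have hco : ∀ n : ℕ, PowerSeries.coeff n (PowerSeries.map (starRingEnd ℂ) c * c)
        = ∑ p ∈ Finset.HasAntidiagonal.antidiagonal n,
          (starRingEnd ℂ) (PowerSeries.coeff p.1 c) * PowerSeries.coeff p.2 c := by
      intro n
      rw [PowerSeries.coeff_mul]
      exact Finset.sum_congr rfl fun p _ => by rw [PowerSeries.coeff_map]
    constructor
    · intro n
      rw [← Complex.conj_eq_iff_real, hco, map_sum]
      conv_rhs => rw [← Finset.HasAntidiagonal.map_swap_antidiagonal, Finset.sum_map]
      exact Finset.sum_congr rfl fun p _ => by simp [mul_comm]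
    · by_cases hc : c = 0
      · left; simp [hc]
      · right
        have hex : ∃ n, PowerSeries.coeff n c ≠ 0 := by
          by_contra h
          push_neg at h
          exact hc (PowerSeries.ext fun n => by simpa using h n)
        set m := Nat.find hex with hm
        have hmin : ∀ k < m, PowerSeries.coeff k c = 0 := fun k hk =>
          not_not.mp (Nat.find_min hex hk)
        have hmne : PowerSeries.coeff m c ≠ 0 := Nat.find_spec hex
        refine ⟨2 * m, ?_, ?_, ⟨m, two_mul m⟩, ?_⟩
        · intro k hk
          rw [hco]
          refine Finset.sum_eq_zero fun p hp => ?_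
          rw [Finset.HasAntidiagonal.mem_antidiagonal] at hp
          rcases lt_or_ge p.1 m with h1 | h1
          · rw [hmin p.1 h1]; simp
          · rw [hmin p.2 (by omega)]; simp
        all_goals
          have key : PowerSeries.coeff (2 * m) (PowerSeries.map (starRingEnd ℂ) c * c)
              = ((‖PowerSeries.coeff m c‖ ^ 2 : ℝ) : ℂ) := by
            rw [hco]
            rw [Finset.sum_eq_single_of_mem (m, m) (by simp [Finset.mem_antidiagonal, two_mul])]
            · exact (Complex.conj_mul' _).trans (by push_cast; ring)
            · intro p hp hne
              rw [Finset.HasAntidiagonal.mem_antidiagonal] at hp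
              rcases lt_or_ge p.1 m with h1 | h1
              · rw [hmin p.1 h1]; simp
              · have h2 : p.2 < m := by
                  rcases lt_or_ge p.2 m with h | h
                  · exact h
                  · exact absurd (Prod.ext (by omega) (by omega)) hne
                rw [hmin p.2 h2]; simp
        · rw [key]
          have : (0:ℝ) < ‖PowerSeries.coeff m c‖ ^ 2 :=
            pow_pos (norm_pos_iff.mpr hmne) 2
          exact_mod_cast this.ne'
        · rw [key]
          have : (0:ℝ) < ‖PowerSeries.coeff m c‖ ^ 2 :=
            pow_pos (norm_pos_iff.mpr hmne) 2
          rw [Complex.ofReal_re]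
          exact this
  · rintro ⟨hre, hb | ⟨l, hk, hl, ⟨m, hm⟩, hpos⟩⟩
    · exact ⟨0, by simp [hb]⟩
    · set a : ℕ → ℝ := fun n => (PowerSeries.coeff (n + l) b).re with ha
      have ha0 : 0 < a 0 := by simpa [ha] using hpos
      set f : PowerSeries ℂ := PowerSeries.mk fun n => ((sqCoeff a n : ℝ) : ℂ) with hf
      refine ⟨PowerSeries.X ^ m * f, ?_⟩
      have hconjf : PowerSeries.map (starRingEnd ℂ) f = f := by
        ext n
        simp [hf, PowerSeries.coeff_map, Complex.conj_ofReal]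
      have hXl : (2 : ℕ) * m = l + 0 := by omega
      rw [map_mul, map_pow, PowerSeries.map_X, hconjf]
      have : PowerSeries.X ^ m * f * (PowerSeries.X ^ m * f)
          = PowerSeries.X ^ l * (f * f) := by
        rw [hm]; ring
      rw [this]
      ext n
      rw [PowerSeries.coeff_X_pow_mul']
      split_ifs with h
      · rw [PowerSeries.coeff_mul, Finset.Nat.sum_antidiagonal_eq_sum_range_succ_mk]
        have : ∑ i ∈ Finset.range (n - l + 1),
            PowerSeries.coeff i f * PowerSeries.coeff (n - l - i) f
            = ((a (n - l) : ℝ) : ℂ) := by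
          rw [← sqCoeff_spec a ha0 (n - l)]
          push_cast
          exact Finset.sum_congr rfl fun i _ => by simp [hf]
        rw [this]
        have hval : a (n - l) = (PowerSeries.coeff n b).re := by
          simp only [ha]
          rw [Nat.sub_add_cancel h]
        rw [hval]
        obtain ⟨r, hr⟩ := hre n
        rw [hr]; simp
      · exact hk n (by omega)
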